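/- For every n ≥ 1, the n-th symmetric product SP^n(S¹) of the circle S¹ (the unit circle Circle = { z ∈ ℂ | |z| = 1 }) is homotopy equivalent to S¹: there exists a continuous homotopy equivalence (ContinuousMap.HomotopyEquiv) between SP^n(Circle) and Circle. -/

import Mathlib

/-- The setoid on `Fin n → X` whose classes are orbits of the permutation action
of `Equiv.Perm (Fin n)`. -/
def SPSetoid (n : ℕ) (X : Type*) : Setoid (Fin n → X) where
  r f g := ∃ σ : Equiv.Perm (Fin n), f ∘ σ = g
  iseqv := by
    constructor
    · exact fun f => ⟨Equiv.refl _, rfl⟩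
    · rintro f g ⟨σ, rfl⟩
      exact ⟨σ.symm, by funext i; simp⟩
    · rintro f g h ⟨σ, rfl⟩ ⟨τ, rfl⟩
      exact ⟨τ.trans σ, by funext i; simp⟩

/-- The `n`-th symmetric product `SP^n(X) = X^n / S_n`, with the quotient topology. -/
def SP (n : ℕ) (X : Type*) [TopologicalSpace X] : Type _ :=
  Quotient (SPSetoid n X)

instance (n : ℕ) (X : Type*) [TopologicalSpace X] : TopologicalSpace (SP n X) :=
  inferInstanceAs (TopologicalSpace (Quotient (SPSetoid n X)))


set_option maxHeartbeats 1000000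

open Polynomial

namespace SPProof

section Functor

variable {n : ℕ} {X Y Z : Type*} [TopologicalSpace X] [TopologicalSpace Y] [TopologicalSpace Z]

/-- The quotient map onto the symmetric product. -/
def spMk (n : ℕ) {X : Type*} [TopologicalSpace X] (z : Fin n → X) : SP n X :=
  Quotient.mk (SPSetoid n X) z

lemma spMk_surjective : Function.Surjective (spMk n (X := X)) :=
  Quotient.mk''_surjective

lemma continuous_spMk : Continuous (spMk n (X := X)) :=
  continuous_quot_mk

lemma continuous_precomp (σ : Equiv.Perm (Fin n)) :
    Continuous (fun z : Fin n → X => z ∘ σ) :=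
  continuous_pi fun i => continuous_apply (σ i)

lemma isOpenMap_spMk : IsOpenMap (spMk n (X := X)) := by
  intro U hU
  have key : spMk n ⁻¹' (spMk n '' U) = ⋃ σ : Equiv.Perm (Fin n), (fun z : Fin n → X => z ∘ σ) ⁻¹' U := by
    ext x
    simp only [Set.mem_preimage, Set.mem_image, Set.mem_iUnion]
    constructor
    · rintro ⟨u, hu, hux⟩
      obtain ⟨σ, hσ⟩ := Quotient.exact hux
      exact ⟨σ.symm, by
        have : u = x ∘ σ.symm := by
          rw [← hσ]; funext i; simp
        rwa [← this]⟩
    · rintro ⟨σ, hσ⟩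
      exact ⟨x ∘ σ, hσ, Quotient.sound ⟨σ.symm, by funext i; simp⟩⟩
  have : IsOpen (spMk n ⁻¹' (spMk n '' U)) := by
    rw [key]
    exact isOpen_iUnion fun σ => (continuous_precomp σ).isOpen_preimage U hU
  exact this

lemma isOpenQuotientMap_spMk : IsOpenQuotientMap (spMk n (X := X)) :=
  ⟨spMk_surjective, continuous_spMk, isOpenMap_spMk⟩

/-- Functoriality of `SP` on continuous maps. -/
def spMap (f : C(X, Y)) : C(SP n X, SP n Y) where
  toFun := Quotient.map' (fun z => f ∘ z) (by
    rintro a b ⟨σ, rfl⟩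
    exact ⟨σ, rfl⟩)
  continuous_toFun := by
    refine isOpenQuotientMap_spMk.isQuotientMap.continuous_iff.mpr ?_
    exact continuous_spMk.comp (continuous_pi fun i => f.continuous.comp (continuous_apply i))

lemma spMap_mk (f : C(X, Y)) (z : Fin n → X) :
    spMap f (spMk n z) = spMk n (f ∘ z) := rfl

lemma spMap_id : spMap (n := n) (ContinuousMap.id X) = ContinuousMap.id (SP n X) := by
  ext x
  induction x using Quotient.inductionOn with
  | h z => rfl

lemma spMap_comp (g : C(Y, Z)) (f : C(X, Y)) :
    spMap (n := n) (g.comp f) = (spMap g).comp (spMap f) := by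
  ext x
  induction x using Quotient.inductionOn with
  | h z => rfl

/-- `SP` preserves homotopies. -/
noncomputable def spHomotopy {f g : C(X, Y)} (H : ContinuousMap.Homotopy f g) :
    ContinuousMap.Homotopy (spMap (n := n) f) (spMap (n := n) g) where
  toFun := fun p =>
    Quotient.lift (fun z : Fin n → X => spMk n (fun i => H (p.1, z i)))
      (by
        rintro a b ⟨σ, rfl⟩
        exact Quotient.sound ⟨σ, rfl⟩) p.2
  continuous_toFun := by
    have hq : Topology.IsQuotientMap (Prod.map (id : unitInterval → unitInterval) (spMk n (X := X))) :=
      (IsOpenQuotientMap.id.prodMap isOpenQuotientMap_spMk).isQuotientMap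
    rw [hq.continuous_iff]
    show Continuous fun p : unitInterval × (Fin n → X) => spMk n (fun i => H (p.1, p.2 i))
    exact continuous_spMk.comp <| continuous_pi fun i =>
      H.continuous.comp (continuous_fst.prodMk ((continuous_apply i).comp continuous_snd))
  map_zero_left := by
    intro x
    induction x using Quotient.inductionOn with
    | h z => simp [spMk, ContinuousMap.Homotopy.apply_zero]; rfl
  map_one_left := by
    intro x
    induction x using Quotient.inductionOn with
    | h z => simp [spMk, ContinuousMap.Homotopy.apply_one]; rfl

lemma spHomotopic {f g : C(X, Y)} (h : ContinuousMap.Homotopic f g) :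
    ContinuousMap.Homotopic (spMap (n := n) f) (spMap (n := n) g) :=
  h.elim fun H => ⟨spHomotopy H⟩

/-- `SP` preserves homotopy equivalences. -/
noncomputable def spHomotopyEquiv (e : ContinuousMap.HomotopyEquiv X Y) :
    ContinuousMap.HomotopyEquiv (SP n X) (SP n Y) where
  toFun := spMap e.toFun
  invFun := spMap e.invFun
  left_inv := by
    have h1 : (spMap (n := n) e.invFun).comp (spMap e.toFun) = spMap (e.invFun.comp e.toFun) :=
      (spMap_comp _ _).symm
    rw [h1, ← spMap_id]
    exact spHomotopic e.left_inv
  right_inv := by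
    have h1 : (spMap (n := n) e.toFun).comp (spMap e.invFun) = spMap (e.toFun.comp e.invFun) :=
      (spMap_comp _ _).symm
    rw [h1, ← spMap_id]
    exact spHomotopic e.right_inv


lemma exists_perm_of_ofFn_perm {α : Type*} :
    ∀ {n : ℕ} {f g : Fin n → α}, (List.ofFn f).Perm (List.ofFn g) →
      ∃ σ : Equiv.Perm (Fin n), f ∘ σ = g := by
  intro n
  induction n with
  | zero =>
    intro f g _
    exact ⟨Equiv.refl _, funext fun i => i.elim0⟩
  | succ n ih =>
    intro f g h
    -- g 0 appears in ofFn f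
    have hg0 : g 0 ∈ List.ofFn f := by
      rw [h.mem_iff]
      rw [List.mem_ofFn]
      exact ⟨0, rfl⟩
    rw [List.mem_ofFn] at hg0
    obtain ⟨i, hi⟩ := hg0
    set τ : Equiv.Perm (Fin (n + 1)) := Equiv.swap 0 i with hτ
    have hfτ0 : (f ∘ τ) 0 = g 0 := by simp [hτ, Equiv.swap_apply_left, hi]
    have hperm : (List.ofFn (f ∘ τ)).Perm (List.ofFn g) :=
      (Equiv.Perm.ofFn_comp_perm τ f).trans h
    rw [List.ofFn_succ, List.ofFn_succ] at hperm
    have hperm' : (List.ofFn fun i : Fin n => (f ∘ τ) i.succ).Perm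
        (List.ofFn fun i : Fin n => g i.succ) := by
      refine List.Perm.cons_inv (a := g 0) ?_
      rw [hfτ0] at hperm
      exact hperm
    obtain ⟨σ', hσ'⟩ := ih hperm'
    refine ⟨(Equiv.Perm.decomposeFin.symm (0, σ')).trans τ, ?_⟩
    funext x
    induction x using Fin.cases with
    | zero =>
      simpa [Equiv.Perm.decomposeFin_symm_apply_zero] using hfτ0
    | succ x =>
      have := congrFun hσ' x
      simp only [Function.comp_apply] at this ⊢
      simpa [Equiv.Perm.decomposeFin_symm_apply_succ] using this


end Functor

variable {n : ℕ}

/-- The monic polynomial with roots `z`. -/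
noncomputable def pol (z : Fin n → ℂ) : ℂ[X] := ∏ i, (X - C (z i))

lemma pol_eq_multiset_prod (z : Fin n → ℂ) :
    pol z = ((Finset.univ.val.map z).map fun a => X - C a).prod := by
  rw [pol, Finset.prod, Multiset.map_map]
  rfl

lemma pol_monic (z : Fin n → ℂ) : (pol z).Monic :=
  monic_prod_of_monic _ _ fun i _ => monic_X_sub_C (z i)

lemma pol_natDegree (z : Fin n → ℂ) : (pol z).natDegree = n := by
  rw [pol, natDegree_prod _ _ fun i _ => X_sub_C_ne_zero (z i)]
  simp

lemma pol_roots (z : Fin n → ℂ) : (pol z).roots = Finset.univ.val.map z := by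
  rw [pol_eq_multiset_prod, roots_multiset_prod_X_sub_C]

lemma pol_comp_perm (z : Fin n → ℂ) (σ : Equiv.Perm (Fin n)) :
    pol (z ∘ σ) = pol z := by
  rw [pol, pol]
  exact Equiv.prod_comp σ fun i => X - C (z i)

/-- The (lower) coefficients of `pol z`. -/
noncomputable def coeffs (z : Fin n → ℂ) : Fin n → ℂ := fun k => (pol z).coeff k

lemma coeffs_comp_perm (z : Fin n → ℂ) (σ : Equiv.Perm (Fin n)) :
    coeffs (z ∘ σ) = coeffs z := by
  unfold coeffs
  rw [pol_comp_perm]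

lemma coeffs_eq_esymm (z : Fin n → ℂ) (k : Fin n) :
    coeffs z k = (-1) ^ (n - (k : ℕ)) *
      ∑ t ∈ Finset.univ.powersetCard (n - (k : ℕ)), t.prod z := by
  have hcard : Multiset.card (Finset.univ.val.map z) = n := by simp
  rw [coeffs, pol_eq_multiset_prod,
    Multiset.prod_X_sub_C_coeff _ (by rw [hcard]; exact k.2.le), hcard,
    Finset.esymm_map_val]

lemma continuous_coeffs : Continuous (coeffs (n := n)) := by
  apply continuous_pi
  intro k
  have : (fun z : Fin n → ℂ => coeffs z k) = fun z =>
      (-1) ^ (n - (k : ℕ)) * ∑ t ∈ Finset.univ.powersetCard (n - (k : ℕ)), t.prod z := by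
    funext z; exact coeffs_eq_esymm z k
  rw [this]
  exact continuous_const.mul <| continuous_finset_sum _ fun t _ =>
    continuous_finset_prod _ fun i _ => continuous_apply i

lemma pol_eq_of_coeffs_eq {z w : Fin n → ℂ} (h : coeffs z = coeffs w) :
    pol z = pol w := by
  ext k
  rcases lt_trichotomy k n with hk | hk | hk
  · exact congrFun h ⟨k, hk⟩
  · rw [hk]
    have h1 := (pol_monic z).coeff_natDegree
    have h2 := (pol_monic w).coeff_natDegree
    rw [pol_natDegree] at h1 h2
    rw [h1, h2]
  · rw [coeff_eq_zero_of_natDegree_lt (by rwa [pol_natDegree]),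
      coeff_eq_zero_of_natDegree_lt (by rwa [pol_natDegree])]

lemma exists_perm_of_coeffs_eq {z w : Fin n → ℂ} (h : coeffs z = coeffs w) :
    ∃ σ : Equiv.Perm (Fin n), z ∘ σ = w := by
  have hp : pol z = pol w := pol_eq_of_coeffs_eq h
  have hr : (Finset.univ.val.map z) = (Finset.univ.val.map w) := by
    rw [← pol_roots, ← pol_roots, hp]
  have hlist : (List.ofFn z).Perm (List.ofFn w) := by
    have hz : Finset.univ.val.map z = ↑(List.ofFn z) := by
      simp [List.ofFn_eq_map, Finset.univ, Fintype.elems]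
    have hw : Finset.univ.val.map w = ↑(List.ofFn w) := by
      simp [List.ofFn_eq_map, Finset.univ, Fintype.elems]
    rw [hz, hw] at hr
    exact Multiset.coe_eq_coe.mp hr
  exact exists_perm_of_ofFn_perm hlist



/-- The candidate polynomial with prescribed lower coefficients. -/
noncomputable def tpol (a : Fin n → ℂ) : ℂ[X] :=
  X ^ n + ∑ k : Fin n, C (a k) * X ^ (k : ℕ)

lemma tpol_degree_lt (a : Fin n → ℂ) :
    (∑ k : Fin n, C (a k) * X ^ (k : ℕ)).degree < (n : WithBot ℕ) := by
  refine lt_of_le_of_lt (degree_sum_le _ _) ?_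
  rw [Finset.sup_lt_iff (by exact_mod_cast WithBot.bot_lt_coe n)]
  intro k _
  exact lt_of_le_of_lt (degree_C_mul_X_pow_le _ _) (by exact_mod_cast k.2)

lemma tpol_monic (a : Fin n → ℂ) : (tpol a).Monic :=
  monic_X_pow_add (tpol_degree_lt a)

lemma tpol_natDegree (a : Fin n → ℂ) : (tpol a).natDegree = n := by
  have : (tpol a).degree = n := by
    rw [tpol, degree_add_eq_left_of_degree_lt (by rw [degree_X_pow]; exact tpol_degree_lt a),
      degree_X_pow]
  exact natDegree_eq_of_degree_eq_some this

lemma tpol_coeff_lt (a : Fin n → ℂ) (k : Fin n) : (tpol a).coeff k = a k := by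
  rw [tpol, coeff_add, coeff_X_pow, if_neg (Nat.ne_of_lt k.2), zero_add, finset_sum_coeff]
  simp only [coeff_C_mul, coeff_X_pow]
  rw [Finset.sum_eq_single k]
  · simp
  · intro j _ hj
    rw [if_neg (fun h => hj (Fin.ext h.symm)), mul_zero]
  · simp

/-- Surjectivity: every coefficient vector arises from some root tuple. -/
lemma exists_coeffs_eq (a : Fin n → ℂ) : ∃ z : Fin n → ℂ, coeffs z = a ∧
    ∀ i, (tpol a).coeff 0 ≠ 0 → z i ≠ 0 := by
  have hsplits : ((tpol a).roots.card = (tpol a).natDegree) :=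
    (splits_iff_card_roots.mp (IsAlgClosed.splits _))
  have hlen : (tpol a).roots.toList.length = n := by
    rw [Multiset.length_toList, hsplits, tpol_natDegree]
  set z : Fin n → ℂ := fun i => (tpol a).roots.toList.get (Fin.cast hlen.symm i) with hz
  have hofFn : List.ofFn z = (tpol a).roots.toList := by
    refine List.ext_get (by simp [hlen]) ?_
    intro i h1 h2
    simp [hz]
  have hmult : (Finset.univ.val.map z : Multiset ℂ) = (tpol a).roots := by
    have : (Finset.univ.val.map z : Multiset ℂ) = ↑(List.ofFn z) := by
      simp [List.ofFn_eq_map, Finset.univ, Fintype.elems]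
    rw [this, hofFn, Multiset.coe_toList]
  have hpol : pol z = tpol a := by
    rw [pol, Finset.prod]
    have h1 : (Finset.univ.val.map fun i => (X : ℂ[X]) - C (z i))
        = (Finset.univ.val.map z).map fun r => X - C r := by
      rw [Multiset.map_map]
      rfl
    rw [h1, hmult]
    exact prod_multiset_X_sub_C_of_monic_of_roots_card_eq (tpol_monic a)
      (by rw [hsplits, tpol_natDegree])
  refine ⟨z, ?_, ?_⟩
  · funext k
    rw [coeffs, hpol, tpol_coeff_lt]
  · intro i h0 hzi
    have hroot : z i ∈ (tpol a).roots := by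
      rw [← hmult]
      exact Multiset.mem_map_of_mem _ (Finset.mem_univ i)
    have := isRoot_of_mem_roots hroot
    rw [IsRoot, hzi] at this
    rw [← coeff_zero_eq_eval_zero] at this
    exact h0 this


lemma pol_eval_root (z : Fin n → ℂ) (i : Fin n) : (pol z).eval (z i) = 0 := by
  rw [pol, eval_prod]
  exact Finset.prod_eq_zero (Finset.mem_univ i) (by simp)

lemma norm_root_le (z : Fin n → ℂ) (i : Fin n) :
    ‖z i‖ ≤ max 1 (∑ k : Fin n, ‖coeffs z k‖) := by
  set r := z i with hr
  by_cases h1 : ‖r‖ ≤ 1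
  · exact le_trans h1 (le_max_left _ _)
  push_neg at h1
  have hnpos : 0 < n := i.pos
  set M := ∑ k : Fin n, ‖coeffs z k‖ with hM
  have hMr : M = ∑ k ∈ Finset.range n, ‖(pol z).coeff k‖ := by
    rw [hM, ← Fin.sum_univ_eq_sum_range (fun k => ‖(pol z).coeff k‖) n]
    rfl
  -- the key equation
  have heval := pol_eval_root z i
  have hsum := (pol_monic z).as_sum
  rw [pol_natDegree] at hsum
  have hkey : r ^ n = -∑ k ∈ Finset.range n, (pol z).coeff k * r ^ k := by
    have := congrArg (Polynomial.eval r) hsum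
    rw [heval] at this
    simp only [eval_add, eval_pow, eval_X, eval_finset_sum, eval_mul, eval_C] at this
    linear_combination -this
  have hnorm : ‖r‖ ^ n ≤ ∑ k ∈ Finset.range n, ‖(pol z).coeff k‖ * ‖r‖ ^ k := by
    calc ‖r‖ ^ n = ‖r ^ n‖ := (norm_pow r n).symm
    _ = ‖∑ k ∈ Finset.range n, (pol z).coeff k * r ^ k‖ := by rw [hkey, norm_neg]
    _ ≤ ∑ k ∈ Finset.range n, ‖(pol z).coeff k * r ^ k‖ := norm_sum_le _ _
    _ = ∑ k ∈ Finset.range n, ‖(pol z).coeff k‖ * ‖r‖ ^ k := by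
        simp [norm_mul, norm_pow]
  have hbound : ‖r‖ ^ n ≤ M * ‖r‖ ^ (n - 1) := by
    rw [hMr, Finset.sum_mul]
    refine le_trans hnorm (Finset.sum_le_sum fun k hk => ?_)
    refine mul_le_mul_of_nonneg_left ?_ (norm_nonneg _)
    exact pow_le_pow_right₀ h1.le (Nat.le_pred_of_lt (Finset.mem_range.mp hk))
  have hrpos : (0 : ℝ) < ‖r‖ ^ (n - 1) := pow_pos (lt_trans one_pos h1) _
  have hfinal : ‖r‖ ≤ M := by
    refine le_of_mul_le_mul_right ?_ hrpos
    calc ‖r‖ * ‖r‖ ^ (n - 1) = ‖r‖ ^ n := by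
          rw [← pow_succ']
          congr 1
          omega
    _ ≤ M * ‖r‖ ^ (n - 1) := hbound
  exact le_trans hfinal (le_max_right _ _)

lemma norm_coeff_zero (z : Fin n → ℂ) (hpos : 0 < n) :
    ‖coeffs z ⟨0, hpos⟩‖ = ∏ i, ‖z i‖ := by
  have : coeffs z ⟨0, hpos⟩ = (pol z).coeff 0 := rfl
  rw [this, coeff_zero_eq_eval_zero, pol, eval_prod]
  simp [norm_prod]

lemma norm_coeff_zero_le (z : Fin n → ℂ) (hpos : 0 < n) (i : Fin n) {R : ℝ}
    (hR : ∀ j, ‖z j‖ ≤ R) :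
    ‖coeffs z ⟨0, hpos⟩‖ ≤ ‖z i‖ * R ^ (n - 1) := by
  rw [norm_coeff_zero z hpos]
  rw [← Finset.mul_prod_erase Finset.univ _ (Finset.mem_univ i)]
  refine mul_le_mul_of_nonneg_left ?_ (norm_nonneg _)
  calc ∏ j ∈ Finset.univ.erase i, ‖z j‖ ≤ ∏ j ∈ Finset.univ.erase i, R :=
        Finset.prod_le_prod (fun j _ => norm_nonneg _) (fun j _ => hR j)
  _ = R ^ (n - 1) := by
        rw [Finset.prod_const, Finset.card_erase_of_mem (Finset.mem_univ i)]
        simp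


/-- A continuous closed bijection is a homeomorphism. -/
noncomputable def homeomorphOfContinuousClosedBijective {A B : Type*} [TopologicalSpace A]
    [TopologicalSpace B] {f : A → B} (hc : Continuous f) (hcl : IsClosedMap f)
    (hb : Function.Bijective f) : A ≃ₜ B where
  toEquiv := Equiv.ofBijective f hb
  continuous_toFun := hc
  continuous_invFun := by
    rw [continuous_iff_isClosed]
    intro C hC
    have himg : (Equiv.ofBijective f hb).invFun ⁻¹' C = f '' C := by
      ext y
      simp only [Set.mem_preimage, Set.mem_image]
      constructor
      · intro hy
        exact ⟨(Equiv.ofBijective f hb).symm y, hy,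
          (Equiv.ofBijective f hb).apply_symm_apply y⟩
      · rintro ⟨x, hx, rfl⟩
        rwa [show (Equiv.ofBijective f hb).invFun (f x) = x from
          (Equiv.ofBijective f hb).symm_apply_apply x]
    rw [himg]
    exact hcl C hC

/-- The nonzero complex numbers. -/
abbrev nzC : Type := {z : ℂ // z ≠ 0}

/-- The coefficient space: tuples with nonzero constant coefficient. -/
abbrev Ncoef (n : ℕ) (hn : 0 < n) : Type := {a : Fin n → ℂ // a ⟨0, hn⟩ ≠ 0}

variable (hn : 0 < n)

/-- Coefficients of the polynomial with roots `z` (all nonzero). -/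
noncomputable def eBarPre (hn : 0 < n) (z : Fin n → nzC) : Ncoef n hn :=
  ⟨coeffs (fun i => (z i : ℂ)), by
    have h := norm_coeff_zero (fun i => (z i : ℂ)) hn
    intro h0
    rw [h0, norm_zero] at h
    have : (0:ℝ) < ∏ i, ‖(z i : ℂ)‖ :=
      Finset.prod_pos fun i _ => norm_pos_iff.mpr (z i).2
    rw [← h] at this
    exact lt_irrefl _ this⟩

lemma continuous_eBarPre : Continuous (eBarPre (n := n) hn) := by
  refine Continuous.subtype_mk ?_ _
  exact continuous_coeffs.comp (continuous_pi fun i =>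
    continuous_subtype_val.comp (continuous_apply i))

/-- The coefficient map on the symmetric product. -/
noncomputable def eBar (hn : 0 < n) : SP n nzC → Ncoef n hn :=
  Quotient.lift (eBarPre hn) (by
    rintro a b ⟨σ, rfl⟩
    apply Subtype.ext
    have : (fun i => ((a ∘ σ) i : ℂ)) = (fun i => (a i : ℂ)) ∘ σ := rfl
    simp only [eBarPre, this]
    exact (coeffs_comp_perm _ σ).symm)

lemma eBar_mk (z : Fin n → nzC) : eBar hn (spMk n z) = eBarPre hn z := rfl

lemma continuous_eBar : Continuous (eBar (n := n) hn) :=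
  (continuous_eBarPre hn).quotient_lift _

lemma eBar_injective : Function.Injective (eBar (n := n) hn) := by
  intro x y h
  obtain ⟨z, rfl⟩ := spMk_surjective x
  obtain ⟨w, rfl⟩ := spMk_surjective y
  rw [eBar_mk, eBar_mk] at h
  have hc : coeffs (fun i => (z i : ℂ)) = coeffs (fun i => (w i : ℂ)) :=
    congrArg Subtype.val h
  obtain ⟨σ, hσ⟩ := exists_perm_of_coeffs_eq hc
  exact Quotient.sound ⟨σ, funext fun i => Subtype.ext (congrFun hσ i)⟩

lemma eBar_surjective : Function.Surjective (eBar (n := n) hn) := by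
  rintro ⟨a, ha⟩
  obtain ⟨z, hz, hz0⟩ := exists_coeffs_eq a
  have h0 : (tpol a).coeff 0 ≠ 0 := by
    have := tpol_coeff_lt a ⟨0, hn⟩
    simpa using this ▸ ha
  refine ⟨spMk n (fun i => ⟨z i, hz0 i h0⟩), ?_⟩
  rw [eBar_mk]
  exact Subtype.ext hz

lemma isCompact_preimage_eBar {K : Set (Ncoef n hn)} (hK : IsCompact K) :
    IsCompact (eBar hn ⁻¹' K) := by
  rcases K.eq_empty_or_nonempty with rfl | hne
  · simp
  -- bounds from compactness
  have hφ : Continuous fun a : Ncoef n hn => ∑ k : Fin n, ‖a.1 k‖ :=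
    continuous_finset_sum _ fun k _ =>
      ((continuous_apply k).comp continuous_subtype_val).norm
  have hψ : Continuous fun a : Ncoef n hn => ‖a.1 ⟨0, hn⟩‖ :=
    ((continuous_apply _).comp continuous_subtype_val).norm
  obtain ⟨aM, -, hM⟩ := hK.exists_isMaxOn hne hφ.continuousOn
  obtain ⟨aδ, haδ, hδ⟩ := hK.exists_isMinOn hne hψ.continuousOn
  rw [isMaxOn_iff] at hM
  rw [isMinOn_iff] at hδ
  set M : ℝ := ∑ k : Fin n, ‖aM.1 k‖ with hMdef
  set δ : ℝ := ‖aδ.1 ⟨0, hn⟩‖ with hδdef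
  have hδpos : 0 < δ := norm_pos_iff.mpr aδ.2
  set R : ℝ := max 1 M with hRdef
  have hR1 : (1:ℝ) ≤ R := le_max_left _ _
  have hRpos : (0:ℝ) < R := lt_of_lt_of_le one_pos hR1
  have hRpow : (0:ℝ) < R ^ (n - 1) := pow_pos hRpos _
  set r : ℝ := δ / R ^ (n - 1) with hrdef
  have hrpos : 0 < r := div_pos hδpos hRpow
  -- the saturated preimage upstairs
  set A : Set (Fin n → nzC) := eBarPre hn ⁻¹' K with hA
  have hAclosed : IsClosed A := hK.isClosed.preimage (continuous_eBarPre hn)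
  -- bounds on elements of A
  have hupper : ∀ z ∈ A, ∀ i, ‖(z i : ℂ)‖ ≤ R := by
    intro z hz i
    have hzK : eBarPre hn z ∈ K := hz
    have hM' : (∑ k : Fin n, ‖coeffs (fun i => (z i : ℂ)) k‖) ≤ M := hM (eBarPre hn z) hzK
    refine le_trans (norm_root_le (fun i => (z i : ℂ)) i) ?_
    exact max_le_max le_rfl hM'
  have hlower : ∀ z ∈ A, ∀ i, r ≤ ‖(z i : ℂ)‖ := by
    intro z hz i
    have hzK : eBarPre hn z ∈ K := hz
    have h1 : δ ≤ ‖coeffs (fun i => (z i : ℂ)) ⟨0, hn⟩‖ := hδ (eBarPre hn z) hzK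
    have h2 := norm_coeff_zero_le (fun i => (z i : ℂ)) hn i (hupper z hz)
    rw [hrdef, div_le_iff₀ hRpow]
    exact le_trans h1 h2
  -- A is contained in a compact "annulus" product
  have hann : IsCompact {w : nzC | ‖(w : ℂ)‖ ∈ Set.Icc r R} := by
    rw [Topology.IsEmbedding.subtypeVal.isCompact_iff]
    have himg : Subtype.val '' {w : nzC | ‖(w : ℂ)‖ ∈ Set.Icc r R}
        = {c : ℂ | ‖c‖ ∈ Set.Icc r R} := by
      ext c
      constructor
      · rintro ⟨w, hw, rfl⟩
        exact hw
      · intro hc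
        have hc0 : c ≠ 0 := by
          intro h0
          simp only [Set.mem_setOf_eq, h0, norm_zero] at hc
          exact absurd hc.1 (not_le.mpr hrpos)
        exact ⟨⟨c, hc0⟩, hc, rfl⟩
    rw [himg]
    refine Metric.isCompact_of_isClosed_isBounded ?_ ?_
    · exact IsClosed.preimage continuous_norm isClosed_Icc
    · refine (Metric.isBounded_closedBall (x := (0:ℂ)) (r := R)).subset ?_
      intro c hc
      rw [Metric.mem_closedBall, dist_zero_right]
      exact hc.2
  have hB : IsCompact (Set.univ.pi fun _ : Fin n => {w : nzC | ‖(w : ℂ)‖ ∈ Set.Icc r R}) :=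
    isCompact_univ_pi fun _ => hann
  have hAB : A ⊆ Set.univ.pi fun _ : Fin n => {w : nzC | ‖(w : ℂ)‖ ∈ Set.Icc r R} := by
    intro z hz
    intro i _
    exact ⟨hlower z hz i, hupper z hz i⟩
  have hAcompact : IsCompact A := hB.of_isClosed_subset hAclosed hAB
  -- the preimage is the image of A
  have hpre : eBar hn ⁻¹' K = spMk n '' A := by
    ext x
    constructor
    · intro hx
      obtain ⟨z, rfl⟩ := spMk_surjective x
      exact ⟨z, hx, rfl⟩
    · rintro ⟨z, hz, rfl⟩
      exact hz
  rw [hpre]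
  exact hAcompact.image continuous_spMk

/-- The coefficient homeomorphism. -/
noncomputable def eBarHomeo (hn : 0 < n) : SP n nzC ≃ₜ Ncoef n hn := by
  haveI : LocallyCompactSpace (Ncoef n hn) := by
    have hopen : IsOpen {a : Fin n → ℂ | a ⟨0, hn⟩ ≠ 0} :=
      isOpen_compl_singleton.preimage (continuous_apply _)
    exact hopen.locallyCompactSpace
  have hproper : IsProperMap (eBar (n := n) hn) :=
    isProperMap_iff_isCompact_preimage.mpr
      ⟨continuous_eBar hn, fun K hK => isCompact_preimage_eBar hn hK⟩
  exact homeomorphOfContinuousClosedBijective (continuous_eBar hn) hproper.isClosedMap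
    ⟨eBar_injective hn, eBar_surjective hn⟩


lemma aux_pos {t s : ℝ} (ht0 : 0 ≤ t) (ht1 : t ≤ 1) (hs : 0 < s) :
    0 < (1 - t) + t * s := by
  rcases lt_or_ge t 1 with h | h
  · nlinarith [mul_nonneg ht0 hs.le]
  · have ht : t = 1 := le_antisymm ht1 h
    rw [ht]
    simpa using hs

/-- Inclusion of the circle into the nonzero complex numbers. -/
def inclCircle : C(Circle, nzC) :=
  ⟨fun z => ⟨z, z.coe_ne_zero⟩, Continuous.subtype_mk continuous_subtype_val _⟩

lemma norm_val_ne_zero (z : nzC) : ‖z.1‖ ≠ 0 := norm_ne_zero_iff.mpr z.2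

/-- Radial retraction onto the circle. -/
noncomputable def retrCircle : C(nzC, Circle) where
  toFun z := ⟨((‖z.1‖ : ℂ))⁻¹ * z.1, by
    show _ ∈ Metric.sphere (0:ℂ) 1
    rw [mem_sphere_zero_iff_norm, norm_mul, norm_inv, Complex.norm_real, Real.norm_eq_abs,
      abs_norm]
    exact inv_mul_cancel₀ (norm_val_ne_zero z)⟩
  continuous_toFun := by
    refine Continuous.subtype_mk ?_ _
    refine Continuous.mul ?_ continuous_subtype_val
    refine Continuous.inv₀ ?_ ?_
    · exact Complex.continuous_ofReal.comp continuous_subtype_val.norm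
    · intro z
      exact_mod_cast Complex.ofReal_ne_zero.mpr (norm_val_ne_zero z)

lemma retr_incl : retrCircle.comp inclCircle = ContinuousMap.id Circle := by
  ext z
  show ((((‖(z : ℂ)‖ : ℝ) : ℂ))⁻¹ * (z : ℂ)) = (z : ℂ)
  have h1 : ‖(z : ℂ)‖ = 1 := mem_sphere_zero_iff_norm.mp z.2
  rw [h1]
  simp

/-- The radial deformation retraction homotopy, from `id` to `incl ∘ retr`. -/
noncomputable def retrHomotopy :
    ContinuousMap.Homotopy (ContinuousMap.id nzC) (inclCircle.comp retrCircle) where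
  toFun := fun p =>
    ⟨(((1 - p.1.1) + p.1.1 * ‖p.2.1‖⁻¹ : ℝ) : ℂ) * p.2.1, by
      refine mul_ne_zero ?_ p.2.2
      refine Complex.ofReal_ne_zero.mpr (ne_of_gt ?_)
      exact aux_pos p.1.2.1 p.1.2.2 (inv_pos.mpr (norm_pos_iff.mpr p.2.2))⟩
  continuous_toFun := by
    refine Continuous.subtype_mk ?_ _
    refine Continuous.mul (Complex.continuous_ofReal.comp ?_) (continuous_subtype_val.comp continuous_snd)
    refine Continuous.add ?_ ?_
    · exact continuous_const.sub (continuous_subtype_val.comp continuous_fst)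
    · refine Continuous.mul (continuous_subtype_val.comp continuous_fst) ?_
      exact ((continuous_subtype_val.comp continuous_snd).norm).inv₀
        (fun p => norm_val_ne_zero p.2)
  map_zero_left := by
    intro z
    apply Subtype.ext
    show ((((1 : ℝ) - 0) + 0 * ‖z.1‖⁻¹ : ℝ) : ℂ) * z.1 = z.1
    norm_num
  map_one_left := by
    intro z
    apply Subtype.ext
    show ((((1 : ℝ) - 1) + 1 * ‖z.1‖⁻¹ : ℝ) : ℂ) * z.1 = ((‖z.1‖ : ℂ))⁻¹ * z.1
    push_cast
    ring_nf

/-- The circle is homotopy equivalent to the nonzero complex numbers. -/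
noncomputable def circleNzHomotopyEquiv : ContinuousMap.HomotopyEquiv Circle nzC where
  toFun := inclCircle
  invFun := retrCircle
  left_inv := by
    rw [retr_incl]
  right_inv := ⟨retrHomotopy.symm⟩

section Ncoef

variable {n : ℕ} (hn : 0 < n)

/-- Projection onto the constant coefficient. -/
def projN : C(Ncoef n hn, nzC) :=
  ⟨fun a => ⟨a.1 ⟨0, hn⟩, a.2⟩,
    Continuous.subtype_mk ((continuous_apply _).comp continuous_subtype_val) _⟩

/-- Section placing a value in the constant coefficient slot. -/
def secN : C(nzC, Ncoef n hn) where
  toFun c := ⟨fun k => if k = ⟨0, hn⟩ then c.1 else 0, by simpa using c.2⟩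
  continuous_toFun := by
    refine Continuous.subtype_mk (continuous_pi fun k => ?_) _
    by_cases h : k = (⟨0, hn⟩ : Fin n)
    · simpa [h] using continuous_subtype_val
    · simpa [h] using continuous_const

lemma projN_secN : (projN hn).comp (secN hn) = ContinuousMap.id nzC := by
  ext c
  show (if (⟨0, hn⟩ : Fin n) = ⟨0, hn⟩ then c.1 else 0) = c.1
  simp

/-- Linear contraction of the non-constant coefficients. -/
noncomputable def contractHomotopy :
    ContinuousMap.Homotopy (ContinuousMap.id (Ncoef n hn)) ((secN hn).comp (projN hn)) where
  toFun := fun p =>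
    ⟨fun k => if k = ⟨0, hn⟩ then p.2.1 k else ((1 - p.1.1 : ℝ) : ℂ) * p.2.1 k, by
      simpa using p.2.2⟩
  continuous_toFun := by
    refine Continuous.subtype_mk (continuous_pi fun k => ?_) _
    by_cases h : k = (⟨0, hn⟩ : Fin n)
    · subst h
      simp only [if_pos rfl]
      exact (continuous_apply _).comp (continuous_subtype_val.comp continuous_snd)
    · simp only [h, if_false]
      refine Continuous.mul (Complex.continuous_ofReal.comp ?_) ?_
      · exact continuous_const.sub (continuous_subtype_val.comp continuous_fst)
      · exact (continuous_apply k).comp (continuous_subtype_val.comp continuous_snd)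
  map_zero_left := by
    intro a
    apply Subtype.ext
    funext k
    show (if k = ⟨0, hn⟩ then a.1 k else ((1 - 0 : ℝ) : ℂ) * a.1 k) = a.1 k
    split <;> norm_num
  map_one_left := by
    intro a
    apply Subtype.ext
    funext k
    show (if k = ⟨0, hn⟩ then a.1 k else ((1 - 1 : ℝ) : ℂ) * a.1 k)
      = if k = ⟨0, hn⟩ then a.1 ⟨0, hn⟩ else 0
    split_ifs with h
    · rw [h]
    · norm_num

/-- The coefficient space is homotopy equivalent to the nonzero complex numbers. -/
noncomputable def ncoefHomotopyEquiv : ContinuousMap.HomotopyEquiv (Ncoef n hn) nzC where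
  toFun := projN hn
  invFun := secN hn
  left_inv := ⟨(contractHomotopy hn).symm⟩
  right_inv := by
    rw [projN_secN]

end Ncoef


end SPProof

/-- For every `n ≥ 1`, the symmetric product `SP^n(S¹)` of the unit circle is
homotopy equivalent to the circle. -/
theorem SP_circle_homotopyEquiv_circle (n : ℕ) (hn : 1 ≤ n) :
    Nonempty (ContinuousMap.HomotopyEquiv (SP n Circle) Circle) := by
  have hn' : 0 < n := hn
  exact ⟨(SPProof.spHomotopyEquiv SPProof.circleNzHomotopyEquiv).trans
    ((SPProof.eBarHomeo hn').toHomotopyEquiv.trans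
      ((SPProof.ncoefHomotopyEquiv hn').trans SPProof.circleNzHomotopyEquiv.symm))⟩
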